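/- Let b, c, T, h be real numbers with 0 ≤ c < b < T and h > 0. Then ∫_{b}^{T} ( (s² − b²)^{−1/2} − ((s+h)² − b²)^{−1/2} ) (s² − c²)^{−1/2} ds ≤ (1/(2b)) · ln( 1 + (2Th + h²)/(b² − c²) + 2 sqrt((2Th + h²)/(b² − c²)) ). -/

import Mathlib

open MeasureTheory Set

private lemma stmt_12_alg (b s a1 a2 a3 : ℝ) (h1 : 0 < a1) (h2 : 0 < a2) (h3 : 0 < a3)
    (hb : 0 < b) :
    1 / b * ((2 * s / (2 * a1) + 2 * s / (2 * a2)) / (a1 + a2) -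
      (2 * s / (2 * a3) + 2 * s / (2 * a2)) / (a3 + a2)) =
    s / b * (a1⁻¹ - a3⁻¹) * a2⁻¹ := by
  have h12 : a1 + a2 ≠ 0 := by positivity
  have h32 : a3 + a2 ≠ 0 := by positivity
  field_simp
  ring

set_option maxHeartbeats 1000000 in
/-- Let `b, c, T, h` be real numbers with `0 ≤ c < b < T` and `h > 0`. Then
`∫_{b}^{T} ((s² − b²)^{−1/2} − ((s+h)² − b²)^{−1/2}) (s² − c²)^{−1/2} ds
  ≤ (1/(2b)) ln(1 + (2Th + h²)/(b² − c²) + 2 √((2Th + h²)/(b² − c²)))`. -/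
theorem stmt_12 (b c T h : ℝ) (hc : 0 ≤ c) (hcb : c < b) (hbT : b < T) (hh : 0 < h) :
    (∫⁻ s in Ioo b T,
        ENNReal.ofReal (((Real.sqrt (s ^ 2 - b ^ 2))⁻¹ -
            (Real.sqrt ((s + h) ^ 2 - b ^ 2))⁻¹) *
          (Real.sqrt (s ^ 2 - c ^ 2))⁻¹)) ≤
      ENNReal.ofReal (1 / (2 * b) *
        Real.log (1 + (2 * T * h + h ^ 2) / (b ^ 2 - c ^ 2) +
          2 * Real.sqrt ((2 * T * h + h ^ 2) / (b ^ 2 - c ^ 2)))) := by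
  have hb : 0 < b := lt_of_le_of_lt hc hcb
  have hT : 0 < T := hb.trans hbT
  set δ : ℝ := 2 * T * h + h ^ 2 with hδdef
  set d : ℝ := b ^ 2 - c ^ 2 with hddef
  have hδ : 0 < δ := by positivity
  have hd : 0 < d := by rw [hddef]; nlinarith
  set Φ : ℝ → ℝ := fun s => 1 / b *
      (Real.log (Real.sqrt (s ^ 2 - b ^ 2) + Real.sqrt (s ^ 2 - c ^ 2)) -
        Real.log (Real.sqrt (s ^ 2 - b ^ 2 + δ) + Real.sqrt (s ^ 2 - c ^ 2))) with hΦdef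
  set ψ : ℝ → ℝ := fun s => s / b *
      ((Real.sqrt (s ^ 2 - b ^ 2))⁻¹ - (Real.sqrt (s ^ 2 - b ^ 2 + δ))⁻¹) *
      (Real.sqrt (s ^ 2 - c ^ 2))⁻¹ with hψdef
  have hBpos : ∀ s ∈ Icc b T, 0 < s ^ 2 - c ^ 2 := by
    intro s hs; nlinarith [hs.1]
  -- ψ is nonnegative on Ioo
  have hψnonneg : ∀ s ∈ Ioo b T, 0 ≤ ψ s := by
    intro s hs
    have hA : 0 < s ^ 2 - b ^ 2 := by nlinarith [hs.1]
    have h1 : Real.sqrt (s ^ 2 - b ^ 2) ≤ Real.sqrt (s ^ 2 - b ^ 2 + δ) :=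
      Real.sqrt_le_sqrt (by linarith)
    have h2 : 0 < Real.sqrt (s ^ 2 - b ^ 2) := Real.sqrt_pos.2 hA
    have h3 : (Real.sqrt (s ^ 2 - b ^ 2 + δ))⁻¹ ≤ (Real.sqrt (s ^ 2 - b ^ 2))⁻¹ :=
      inv_anti₀ h2 h1
    have h4 : (0:ℝ) ≤ s / b := by
      have : 0 < s := hb.trans hs.1; positivity
    have h5 : (0:ℝ) ≤ (Real.sqrt (s ^ 2 - c ^ 2))⁻¹ := by positivity
    have h6 : (0:ℝ) ≤ (Real.sqrt (s ^ 2 - b ^ 2))⁻¹ - (Real.sqrt (s ^ 2 - b ^ 2 + δ))⁻¹ := by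
      linarith
    simp only [hψdef]
    positivity
  -- pointwise bound of the integrand by ψ
  have hpt : ∀ s ∈ Ioo b T,
      ((Real.sqrt (s ^ 2 - b ^ 2))⁻¹ - (Real.sqrt ((s + h) ^ 2 - b ^ 2))⁻¹) *
        (Real.sqrt (s ^ 2 - c ^ 2))⁻¹ ≤ ψ s := by
    intro s hs
    have hA : 0 < s ^ 2 - b ^ 2 := by nlinarith [hs.1]
    have hAh : 0 < (s + h) ^ 2 - b ^ 2 := by nlinarith [hs.1]
    have hAhC : (s + h) ^ 2 - b ^ 2 ≤ s ^ 2 - b ^ 2 + δ := by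
      rw [hδdef]; nlinarith [hs.2]
    have h1 : Real.sqrt ((s + h) ^ 2 - b ^ 2) ≤ Real.sqrt (s ^ 2 - b ^ 2 + δ) :=
      Real.sqrt_le_sqrt hAhC
    have h2 : 0 < Real.sqrt ((s + h) ^ 2 - b ^ 2) := Real.sqrt_pos.2 hAh
    have h3 : (Real.sqrt (s ^ 2 - b ^ 2 + δ))⁻¹ ≤ (Real.sqrt ((s + h) ^ 2 - b ^ 2))⁻¹ :=
      inv_anti₀ h2 h1
    have hAC : Real.sqrt (s ^ 2 - b ^ 2) ≤ Real.sqrt (s ^ 2 - b ^ 2 + δ) :=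
      Real.sqrt_le_sqrt (by linarith)
    have h2' : 0 < Real.sqrt (s ^ 2 - b ^ 2) := Real.sqrt_pos.2 hA
    have h4 : (Real.sqrt (s ^ 2 - b ^ 2 + δ))⁻¹ ≤ (Real.sqrt (s ^ 2 - b ^ 2))⁻¹ :=
      inv_anti₀ h2' hAC
    have hsb : 1 ≤ s / b := (one_le_div hb).2 hs.1.le
    have hbr : (Real.sqrt (s ^ 2 - b ^ 2))⁻¹ - (Real.sqrt ((s + h) ^ 2 - b ^ 2))⁻¹ ≤
        s / b * ((Real.sqrt (s ^ 2 - b ^ 2))⁻¹ - (Real.sqrt (s ^ 2 - b ^ 2 + δ))⁻¹) := by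
      have step2 := le_mul_of_one_le_left (by linarith : (0:ℝ) ≤
          (Real.sqrt (s ^ 2 - b ^ 2))⁻¹ - (Real.sqrt (s ^ 2 - b ^ 2 + δ))⁻¹) hsb
      linarith
    have h5 : (0:ℝ) ≤ (Real.sqrt (s ^ 2 - c ^ 2))⁻¹ := by positivity
    simpa only [hψdef] using mul_le_mul_of_nonneg_right hbr h5
  -- derivative of Φ is ψ on Ioo
  have hderiv : ∀ s ∈ Ioo b T, HasDerivAt Φ (ψ s) s := by
    intro s hs
    have hs' : s ∈ Icc b T := Ioo_subset_Icc_self hs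
    have hA : 0 < s ^ 2 - b ^ 2 := by nlinarith [hs.1]
    have hB : 0 < s ^ 2 - c ^ 2 := hBpos s hs'
    have hC : 0 < s ^ 2 - b ^ 2 + δ := by linarith
    have hsqA : 0 < Real.sqrt (s ^ 2 - b ^ 2) := Real.sqrt_pos.2 hA
    have hsqB : 0 < Real.sqrt (s ^ 2 - c ^ 2) := Real.sqrt_pos.2 hB
    have hsqC : 0 < Real.sqrt (s ^ 2 - b ^ 2 + δ) := Real.sqrt_pos.2 hC
    have dA : HasDerivAt (fun x : ℝ => x ^ 2 - b ^ 2) (2 * s) s := by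
      simpa using (hasDerivAt_pow 2 s).sub_const (b ^ 2)
    have dB : HasDerivAt (fun x : ℝ => x ^ 2 - c ^ 2) (2 * s) s := by
      simpa using (hasDerivAt_pow 2 s).sub_const (c ^ 2)
    have dC : HasDerivAt (fun x : ℝ => x ^ 2 - b ^ 2 + δ) (2 * s) s := by
      simpa using ((hasDerivAt_pow 2 s).sub_const (b ^ 2)).add_const δ
    have dsA := dA.sqrt hA.ne'
    have dsB := dB.sqrt hB.ne'
    have dsC := dC.sqrt hC.ne'
    have dlog1 := (dsA.add dsB).log (add_pos hsqA hsqB).ne'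
    have dlog2 := (dsC.add dsB).log (add_pos hsqC hsqB).ne'
    have hder := (dlog1.sub dlog2).const_mul (1 / b)
    have halg := stmt_12_alg b s (Real.sqrt (s ^ 2 - b ^ 2)) (Real.sqrt (s ^ 2 - c ^ 2))
      (Real.sqrt (s ^ 2 - b ^ 2 + δ)) hsqA hsqB hsqC hb
    rw [hψdef]
    exact hder.congr_deriv halg
  -- continuity of Φ on Icc
  have hcont : ContinuousOn Φ (Icc b T) := by
    have c1 : Continuous fun s : ℝ => Real.sqrt (s ^ 2 - b ^ 2) + Real.sqrt (s ^ 2 - c ^ 2) := by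
      fun_prop
    have c2 : Continuous fun s : ℝ =>
        Real.sqrt (s ^ 2 - b ^ 2 + δ) + Real.sqrt (s ^ 2 - c ^ 2) := by fun_prop
    rw [hΦdef]
    apply ContinuousOn.mul continuousOn_const
    apply ContinuousOn.sub
    · apply ContinuousOn.log c1.continuousOn
      intro s hs
      have h1 : 0 < Real.sqrt (s ^ 2 - c ^ 2) := Real.sqrt_pos.2 (hBpos s hs)
      have h2 : 0 ≤ Real.sqrt (s ^ 2 - b ^ 2) := Real.sqrt_nonneg _
      positivity
    · apply ContinuousOn.log c2.continuousOn
      intro s hs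
      have h1 : 0 < Real.sqrt (s ^ 2 - c ^ 2) := Real.sqrt_pos.2 (hBpos s hs)
      have h2 : 0 ≤ Real.sqrt (s ^ 2 - b ^ 2 + δ) := Real.sqrt_nonneg _
      positivity
  -- an integrable dominating function
  have hdom : IntegrableOn (fun s => (Real.sqrt (s - b))⁻¹) (Ioo b T) := by
    have h1 : IntervalIntegrable (fun x : ℝ => x ^ (-(1/2) : ℝ)) volume 0 (T - b) :=
      intervalIntegral.intervalIntegrable_rpow' (by norm_num)
    have h2 : IntervalIntegrable (fun x : ℝ => (x - b) ^ (-(1/2) : ℝ)) volume b T := by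
      have := h1.comp_sub_right b
      simpa using this
    have h3 : IntegrableOn (fun x : ℝ => (x - b) ^ (-(1/2) : ℝ)) (Ioo b T) :=
      (intervalIntegrable_iff_integrableOn_Ioo_of_le hbT.le).1 h2
    apply h3.congr_fun ?_ measurableSet_Ioo
    intro s hs
    have hsb : (0:ℝ) ≤ s - b := le_of_lt (sub_pos.2 hs.1)
    simp only
    rw [Real.sqrt_eq_rpow, ← Real.rpow_neg hsb]
  -- ψ is a.e. strongly measurable on Ioo
  have hψmeas : AEStronglyMeasurable ψ (volume.restrict (Ioo b T)) := by
    apply ContinuousOn.aestronglyMeasurable ?_ measurableSet_Ioo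
    rw [hψdef]
    apply ContinuousOn.mul
    apply ContinuousOn.mul
    · exact (continuousOn_id.div_const b)
    · apply ContinuousOn.sub
      · apply ContinuousOn.inv₀
        · fun_prop
        · intro s hs
          have hA : 0 < s ^ 2 - b ^ 2 := by nlinarith [hs.1]
          exact (Real.sqrt_pos.2 hA).ne'
      · apply ContinuousOn.inv₀
        · fun_prop
        · intro s hs
          have hA : 0 < s ^ 2 - b ^ 2 := by nlinarith [hs.1]
          exact (Real.sqrt_pos.2 (by linarith : 0 < s ^ 2 - b ^ 2 + δ)).ne'
    · apply ContinuousOn.inv₀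
      · fun_prop
      · intro s hs
        have hB : 0 < s ^ 2 - c ^ 2 := hBpos s (Ioo_subset_Icc_self hs)
        exact (Real.sqrt_pos.2 hB).ne'
  -- integrability of ψ
  have hψint : IntegrableOn ψ (Ioo b T) := by
    set C0 : ℝ := T / b * (Real.sqrt (2 * b))⁻¹ * (Real.sqrt d)⁻¹ with hC0
    have hgint : IntegrableOn (fun s => C0 * (Real.sqrt (s - b))⁻¹) (Ioo b T) :=
      hdom.const_mul C0
    apply Integrable.mono' hgint hψmeas
    apply ae_restrict_of_forall_mem measurableSet_Ioo
    intro s hs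
    rw [Real.norm_eq_abs, abs_of_nonneg (hψnonneg s hs)]
    have hA : 0 < s ^ 2 - b ^ 2 := by nlinarith [hs.1]
    have hB : 0 < s ^ 2 - c ^ 2 := hBpos s (Ioo_subset_Icc_self hs)
    have hsb0 : 0 < s - b := sub_pos.2 hs.1
    have hsqA : 0 < Real.sqrt (s ^ 2 - b ^ 2) := Real.sqrt_pos.2 hA
    have hsqd : 0 < Real.sqrt d := Real.sqrt_pos.2 hd
    have hsq2b : 0 < Real.sqrt (2 * b * (s - b)) := Real.sqrt_pos.2 (by positivity)
    have m1 : s / b ≤ T / b := by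
      gcongr
      exact hs.2.le
    have m2 : (Real.sqrt (s ^ 2 - b ^ 2))⁻¹ ≤ (Real.sqrt (2 * b))⁻¹ * (Real.sqrt (s - b))⁻¹ := by
      have hge : 2 * b * (s - b) ≤ s ^ 2 - b ^ 2 := by nlinarith [hs.1]
      have := inv_anti₀ hsq2b (Real.sqrt_le_sqrt hge)
      rwa [Real.sqrt_mul (by positivity) (s - b), mul_inv] at this
    have m3 : (Real.sqrt (s ^ 2 - c ^ 2))⁻¹ ≤ (Real.sqrt d)⁻¹ := by
      apply inv_anti₀ hsqd
      apply Real.sqrt_le_sqrt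
      rw [hddef]; nlinarith [hs.1]
    have mbr : (Real.sqrt (s ^ 2 - b ^ 2))⁻¹ - (Real.sqrt (s ^ 2 - b ^ 2 + δ))⁻¹ ≤
        (Real.sqrt (s ^ 2 - b ^ 2))⁻¹ := by
      have : (0:ℝ) ≤ (Real.sqrt (s ^ 2 - b ^ 2 + δ))⁻¹ := by positivity
      linarith
    have hsp : 0 < s := hb.trans hs.1
    calc ψ s ≤ s / b * (Real.sqrt (s ^ 2 - b ^ 2))⁻¹ * (Real.sqrt (s ^ 2 - c ^ 2))⁻¹ := by
          simp only [hψdef]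
          apply mul_le_mul_of_nonneg_right _ (by positivity)
          exact mul_le_mul_of_nonneg_left mbr (by positivity)
      _ ≤ T / b * ((Real.sqrt (2 * b))⁻¹ * (Real.sqrt (s - b))⁻¹) * (Real.sqrt d)⁻¹ := by
          apply mul_le_mul _ m3 (by positivity) (by positivity)
          apply mul_le_mul m1 m2 (by positivity) (by positivity)
      _ = C0 * (Real.sqrt (s - b))⁻¹ := by rw [hC0]; ring
  -- fundamental theorem of calculus
  have hint : IntervalIntegrable ψ volume b T :=
    (intervalIntegrable_iff_integrableOn_Ioo_of_le hbT.le).2 hψint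
  have hFTC : ∫ s in b..T, ψ s = Φ T - Φ b :=
    intervalIntegral.integral_eq_sub_of_hasDerivAt_of_le hbT.le hcont hderiv hint
  -- the final real inequality
  have hsd : 0 < Real.sqrt d := Real.sqrt_pos.2 hd
  have hsδ : 0 < Real.sqrt δ := Real.sqrt_pos.2 hδ
  have hre : Φ T - Φ b ≤ 1 / (2 * b) * Real.log (1 + δ / d + 2 * Real.sqrt (δ / d)) := by
    have hΦT : Φ T ≤ 0 := by
      have hTB : 0 < T ^ 2 - c ^ 2 := by nlinarith
      have harg1 : 0 < Real.sqrt (T ^ 2 - b ^ 2) + Real.sqrt (T ^ 2 - c ^ 2) := by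
        have := Real.sqrt_pos.2 hTB
        have := Real.sqrt_nonneg (T ^ 2 - b ^ 2)
        linarith
      have hle : Real.sqrt (T ^ 2 - b ^ 2) + Real.sqrt (T ^ 2 - c ^ 2) ≤
          Real.sqrt (T ^ 2 - b ^ 2 + δ) + Real.sqrt (T ^ 2 - c ^ 2) := by
        have := Real.sqrt_le_sqrt (show T ^ 2 - b ^ 2 ≤ T ^ 2 - b ^ 2 + δ by linarith)
        linarith
      have hlog := Real.log_le_log harg1 hle
      have h1b : (0:ℝ) ≤ 1 / b := by positivity
      simp only [hΦdef]
      nlinarith [hlog, h1b]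
    have hΦb : Φ b = 1 / b * (Real.log (Real.sqrt d) -
        Real.log (Real.sqrt δ + Real.sqrt d)) := by
      simp only [hΦdef, sub_self, Real.sqrt_zero, zero_add, ← hddef]
    have hlogeq : Real.log (1 + δ / d + 2 * Real.sqrt (δ / d)) =
        2 * (Real.log (Real.sqrt δ + Real.sqrt d) - Real.log (Real.sqrt d)) := by
      have h1 : 1 + δ / d + 2 * Real.sqrt (δ / d) =
          ((Real.sqrt δ + Real.sqrt d) / Real.sqrt d) ^ 2 := by
        rw [Real.sqrt_div hδ.le]
        have e1 : Real.sqrt d ^ 2 = d := Real.sq_sqrt hd.le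
        have e2 : Real.sqrt δ ^ 2 = δ := Real.sq_sqrt hδ.le
        have e3 : δ / d = (Real.sqrt δ / Real.sqrt d) ^ 2 := by rw [div_pow, e1, e2]
        rw [e3, add_div, div_self hsd.ne']
        ring
      rw [h1, Real.log_pow, Real.log_div (by positivity) hsd.ne']
      push_cast; ring
    rw [hlogeq, hΦb]
    have heq : 1 / (2 * b) * (2 * (Real.log (Real.sqrt δ + Real.sqrt d) -
        Real.log (Real.sqrt d))) = 1 / b * (Real.log (Real.sqrt δ + Real.sqrt d) -
        Real.log (Real.sqrt d)) := by
      field_simp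
    rw [heq]
    have : 1 / b * (Real.log (Real.sqrt d) - Real.log (Real.sqrt δ + Real.sqrt d)) =
        -(1 / b * (Real.log (Real.sqrt δ + Real.sqrt d) - Real.log (Real.sqrt d))) := by ring
    rw [this]
    linarith
  -- put everything together
  calc (∫⁻ s in Ioo b T,
        ENNReal.ofReal (((Real.sqrt (s ^ 2 - b ^ 2))⁻¹ -
            (Real.sqrt ((s + h) ^ 2 - b ^ 2))⁻¹) *
          (Real.sqrt (s ^ 2 - c ^ 2))⁻¹)) ≤
      ∫⁻ s in Ioo b T, ENNReal.ofReal (ψ s) := by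
        apply lintegral_mono_ae
        apply ae_restrict_of_forall_mem measurableSet_Ioo
        intro s hs
        exact ENNReal.ofReal_le_ofReal (hpt s hs)
    _ = ENNReal.ofReal (∫ s in Ioo b T, ψ s) := by
        rw [ofReal_integral_eq_lintegral_ofReal hψint
          (ae_restrict_of_forall_mem measurableSet_Ioo hψnonneg)]
    _ ≤ ENNReal.ofReal (1 / (2 * b) *
        Real.log (1 + δ / d + 2 * Real.sqrt (δ / d))) := by
        apply ENNReal.ofReal_le_ofReal
        have heqI : ∫ s in Ioo b T, ψ s = ∫ s in b..T, ψ s := by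
          rw [intervalIntegral.integral_of_le hbT.le, integral_Ioc_eq_integral_Ioo]
        rw [heqI, hFTC]
        exact hre
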